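/- Every algebraic formal power series is D-finite. -/
import Mathlib


open PowerSeries

/-- A formal power series over ℚ is D-finite if it satisfies a nontrivial linear
differential equation with polynomial coefficients. -/
def IsDFinitePS (f : PowerSeries ℚ) : Prop :=
  ∃ (k : ℕ) (c : Fin (k + 1) → Polynomial ℚ), (∃ i, c i ≠ 0) ∧
    ∑ i : Fin (k + 1),
      ((c i : PowerSeries ℚ) * ((fun g => derivative ℚ g)^[(i : ℕ)] f)) = 0

/-- A formal power series over ℚ is algebraic if it is the root of a nonzero
polynomial with coefficients in ℚ[x]. -/
def IsAlgebraicPS (f : PowerSeries ℚ) : Prop :=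
  ∃ P : Polynomial (Polynomial ℚ),
    P ≠ 0 ∧ Polynomial.eval₂ Polynomial.coeToPowerSeries.ringHom f P = 0

private lemma deriv_pow_mul (x : PowerSeries ℚ) (m : ℕ) :
    (derivative ℚ (x ^ m)) * x = (m : PowerSeries ℚ) * x ^ m * (derivative ℚ x) := by
  induction m with
  | zero => simp
  | succ m ih =>
    rw [pow_succ, Derivation.leibniz]
    push_cast
    simp only [smul_eq_mul]
    ring_nf
    linear_combination x * ih

private lemma deriv_eval (f : PowerSeries ℚ) (A : Polynomial (Polynomial ℚ)) :
    ∃ B : Polynomial (Polynomial ℚ),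
      derivative ℚ (Polynomial.eval₂ Polynomial.coeToPowerSeries.ringHom f A) =
        Polynomial.eval₂ Polynomial.coeToPowerSeries.ringHom f B
        + Polynomial.eval₂ Polynomial.coeToPowerSeries.ringHom f (Polynomial.derivative A)
          * derivative ℚ f := by
  induction A using Polynomial.induction_on with
  | C p =>
      refine ⟨Polynomial.C (Polynomial.derivative p), ?_⟩
      simp [Polynomial.eval₂_C, Polynomial.coeToPowerSeries.ringHom_apply,
        PowerSeries.derivative_coe]
  | add p q hp hq =>
      obtain ⟨B₁, h₁⟩ := hp
      obtain ⟨B₂, h₂⟩ := hq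
      refine ⟨B₁ + B₂, ?_⟩
      simp only [Polynomial.eval₂_add, map_add, Polynomial.derivative_add, h₁, h₂]
      ring
  | monomial n p ih =>
      obtain ⟨B, hB⟩ := ih
      refine ⟨B * Polynomial.X, ?_⟩
      have h1 : (Polynomial.C p * Polynomial.X ^ (n + 1) : Polynomial (Polynomial ℚ))
          = (Polynomial.C p * Polynomial.X ^ n) * Polynomial.X := by ring
      rw [h1, Polynomial.eval₂_mul, Polynomial.eval₂_X, Derivation.leibniz, smul_eq_mul,
        smul_eq_mul, hB]
      simp only [Polynomial.derivative_mul, Polynomial.derivative_X, Polynomial.derivative_C,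
        Polynomial.eval₂_mul, Polynomial.eval₂_add, Polynomial.eval₂_X, mul_one, zero_mul,
        zero_add]
      ring

private lemma key_induction (f : PowerSeries ℚ) (P : Polynomial (Polynomial ℚ))
    (hPe : Polynomial.eval₂ Polynomial.coeToPowerSeries.ringHom f P = 0) (n : ℕ) :
    ∃ A : Polynomial (Polynomial ℚ),
      (Polynomial.eval₂ Polynomial.coeToPowerSeries.ringHom f (Polynomial.derivative P)) ^ (2*n)
        * (fun g => derivative ℚ g)^[n] f
      = Polynomial.eval₂ Polynomial.coeToPowerSeries.ringHom f A := by
  set E : Polynomial (Polynomial ℚ) →+* PowerSeries ℚ :=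
    Polynomial.eval₂RingHom Polynomial.coeToPowerSeries.ringHom f with hE
  have hEeq : ∀ A, Polynomial.eval₂ Polynomial.coeToPowerSeries.ringHom f A = E A := fun A => rfl
  simp only [hEeq] at hPe ⊢
  set Py : Polynomial (Polynomial ℚ) := Polynomial.derivative P with hPy
  set D : PowerSeries ℚ → PowerSeries ℚ := fun g => derivative ℚ g with hD
  -- the relation g * f' = - E BP
  obtain ⟨BP, hBP⟩ := deriv_eval f P
  simp only [hEeq, hPe, map_zero] at hBP
  have E3 : E BP + E Py * D f = 0 := by linear_combination -hBP
  obtain ⟨BY, hBY⟩ := deriv_eval f Py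
  simp only [hEeq] at hBY
  induction n with
  | zero =>
      exact ⟨Polynomial.X, by simp [hE]⟩
  | succ n ih =>
      obtain ⟨A, hA⟩ := ih
      obtain ⟨B, hB⟩ := deriv_eval f A
      simp only [hEeq] at hB
      refine ⟨Py^2 * B - Py * (Polynomial.derivative A) * BP
        - ((2*n : ℕ) : Polynomial (Polynomial ℚ)) * ((Py * BY - Polynomial.derivative Py * BP) * A), ?_⟩
      have E1 : (E Py)^(2*n) * D (D^[n] f) + (D^[n] f) * (derivative ℚ ((E Py)^(2*n)))
          = E B + E (Polynomial.derivative A) * D f := by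
        have := congrArg (derivative ℚ) hA
        rw [Derivation.leibniz] at this
        simpa [smul_eq_mul, hD, mul_comm, hB] using this
      have E2 := deriv_pow_mul (E Py) (2*n)
      push_cast at E2
      have E4 : D (E Py) = E BY + E (Polynomial.derivative Py) * D f := hBY
      rw [Function.iterate_succ_apply']
      simp only [map_mul, map_sub, map_pow, map_natCast]
      have hDg : D (E Py) = derivative ℚ (E Py) := rfl
      have hDf : D (D^[n] f) = derivative ℚ (D^[n] f) := rfl
      push_cast
      linear_combination ((E Py)^2) * E1 - ((E Py) * (D^[n] f)) * E2
        + ((E Py) * E (Polynomial.derivative A) - (2*(n:PowerSeries ℚ)) * (E A) * E (Polynomial.derivative Py)) * E3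
        - ((2*(n:PowerSeries ℚ)) * (E Py)^(2*n+1) * (D^[n] f)) * E4
        + (-(2*(n:PowerSeries ℚ)) * (E Py) * (E BY) - (2*(n:PowerSeries ℚ)) * (E Py) * E (Polynomial.derivative Py) * (D f)) * hA

private lemma lin_dep_of_mem_adjoin (K L : Type*) [Field K] [Field L] [Algebra K L]
    (x : L) (hx : IsIntegral K x) (u : ℕ → L)
    (hu : ∀ n, u n ∈ IntermediateField.adjoin K {x}) :
    ∃ (m : ℕ) (r : Fin (m + 1) → K), (∃ i, r i ≠ 0) ∧ ∑ i, r i • u (i : ℕ) = 0 := by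
  set W := IntermediateField.adjoin K {x} with hW
  haveI : FiniteDimensional K W := IntermediateField.adjoin.finiteDimensional hx
  set m := Module.finrank K W with hm
  set v : Fin (m + 1) → W := fun i => ⟨u (i : ℕ), hu i⟩ with hv
  have hnli : ¬ LinearIndependent K v := by
    intro h
    have := h.fintype_card_le_finrank
    rw [Fintype.card_fin] at this
    omega
  obtain ⟨r, hr0, i₀, hri⟩ := Fintype.not_linearIndependent_iff.mp hnli
  refine ⟨m, r, ⟨i₀, hri⟩, ?_⟩
  have h4 : W.val (∑ i, r i • v i) = 0 := by rw [hr0, map_zero]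
  rw [map_sum] at h4
  have h5 : ∀ i : Fin (m + 1), W.val (r i • v i) = r i • u (i : ℕ) := by
    intro i
    rw [map_smul]
    rfl
  rw [Finset.sum_congr rfl (fun i _ => h5 i)] at h4
  exact h4

set_option synthInstance.maxHeartbeats 1000000 in
set_option maxHeartbeats 4000000 in
/-- Every algebraic formal power series is D-finite. -/
theorem dfinite_of_algebraic (f : PowerSeries ℚ) (hf : IsAlgebraicPS f) :
    IsDFinitePS f := by
  classical
  obtain ⟨P₀, hP₀, hP₀e⟩ := hf
  have hex : ∃ n : ℕ, ∃ Q : Polynomial (Polynomial ℚ), Q ≠ 0 ∧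
      Polynomial.eval₂ Polynomial.coeToPowerSeries.ringHom f Q = 0 ∧ Q.natDegree = n :=
    ⟨P₀.natDegree, P₀, hP₀, hP₀e, rfl⟩
  obtain ⟨P, hP0, hPe, hPdeg⟩ := Nat.find_spec hex
  have hmin : ∀ Q : Polynomial (Polynomial ℚ), Q ≠ 0 →
      Polynomial.eval₂ Polynomial.coeToPowerSeries.ringHom f Q = 0 →
      P.natDegree ≤ Q.natDegree := by
    intro Q h1 h2
    rw [hPdeg]
    exact Nat.find_min' hex ⟨Q, h1, h2, rfl⟩
  have hdeg0 : P.natDegree ≠ 0 := by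
    intro h
    have hC := Polynomial.eq_C_of_natDegree_eq_zero h
    rw [hC, Polynomial.eval₂_C, Polynomial.coeToPowerSeries.ringHom_apply,
      Polynomial.coe_eq_zero_iff] at hPe
    rw [hC, hPe, map_zero] at hP0
    exact hP0 rfl
  set Py : Polynomial (Polynomial ℚ) := Polynomial.derivative P with hPydef
  have hPy0 : Py ≠ 0 := fun h => hdeg0 (Polynomial.natDegree_eq_zero_of_derivative_eq_zero h)
  have hgne : Polynomial.eval₂ Polynomial.coeToPowerSeries.ringHom f Py ≠ 0 := by
    intro h
    have hlt := Polynomial.natDegree_derivative_lt hdeg0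
    rw [← hPydef] at hlt
    have := hmin Py hPy0 h
    omega
  -- Part 2 : fraction fields
  set L := FractionRing (PowerSeries ℚ) with hL
  set ι : PowerSeries ℚ →+* L := algebraMap (PowerSeries ℚ) L with hι'
  have hι : Function.Injective ι := IsFractionRing.injective (PowerSeries ℚ) L
  set φ : Polynomial ℚ →+* L := ι.comp Polynomial.coeToPowerSeries.ringHom with hφ'
  have hφ : Function.Injective φ := by
    intro a b h
    exact Polynomial.coe_injective ℚ (hι h)
  letI : Algebra (RatFunc ℚ) L := (IsFractionRing.lift (A := Polynomial ℚ) hφ).toAlgebra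
  have halg : ∀ q : Polynomial ℚ,
      algebraMap (RatFunc ℚ) L (algebraMap (Polynomial ℚ) (RatFunc ℚ) q) = φ q := by
    intro q
    rw [RingHom.algebraMap_toAlgebra]
    exact IsFractionRing.lift_algebraMap hφ q
  set x : L := ι f with hx
  have hEL : ∀ A : Polynomial (Polynomial ℚ),
      ι (Polynomial.eval₂ Polynomial.coeToPowerSeries.ringHom f A)
        = Polynomial.aeval x (A.map (algebraMap (Polynomial ℚ) (RatFunc ℚ))) := by
    intro A
    have hcomp : ((algebraMap (RatFunc ℚ) L).comp (algebraMap (Polynomial ℚ) (RatFunc ℚ))) = φ :=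
      RingHom.ext halg
    rw [Polynomial.hom_eval₂, Polynomial.aeval_def, Polynomial.eval₂_map, hcomp]
  have hxalg : IsAlgebraic (RatFunc ℚ) x := by
    refine ⟨P.map (algebraMap (Polynomial ℚ) (RatFunc ℚ)), ?_, ?_⟩
    · rw [Ne, Polynomial.map_eq_zero_iff (IsFractionRing.injective _ _)]
      exact hP0
    · rw [← hEL P, hPe, map_zero]
  have hxint : IsIntegral (RatFunc ℚ) x := hxalg.isIntegral
  set W : IntermediateField (RatFunc ℚ) L := IntermediateField.adjoin (RatFunc ℚ) {x} with hW
  have hmemW : ∀ A : Polynomial (Polynomial ℚ),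
      ι (Polynomial.eval₂ Polynomial.coeToPowerSeries.ringHom f A) ∈ W := by
    intro A
    rw [hEL A]
    have h1 : Polynomial.aeval x (A.map (algebraMap (Polynomial ℚ) (RatFunc ℚ)))
        ∈ Algebra.adjoin (RatFunc ℚ) {x} := by
      rw [Algebra.adjoin_singleton_eq_range_aeval]
      exact ⟨_, rfl⟩
    exact IntermediateField.algebra_adjoin_le_adjoin _ _ h1
  have hgW : ι (Polynomial.eval₂ Polynomial.coeToPowerSeries.ringHom f Py) ∈ W := hmemW Py
  have hgL0 : ι (Polynomial.eval₂ Polynomial.coeToPowerSeries.ringHom f Py) ≠ 0 := by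
    intro h
    exact hgne (hι (by rw [h, map_zero]))
  have hDnW : ∀ n : ℕ, ι ((fun g => derivative ℚ g)^[n] f) ∈ W := by
    intro n
    obtain ⟨A, hA⟩ := key_induction f P hPe n
    have h2 := congrArg ι hA
    rw [map_mul, map_pow, ← hPydef] at h2
    have h3 : ι ((fun g => derivative ℚ g)^[n] f)
        = ((ι (Polynomial.eval₂ Polynomial.coeToPowerSeries.ringHom f Py))⁻¹) ^ (2*n)
          * ι (Polynomial.eval₂ Polynomial.coeToPowerSeries.ringHom f A) := by
      rw [inv_pow, ← h2, inv_mul_cancel_left₀ (pow_ne_zero _ hgL0)]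
    rw [h3]
    exact mul_mem (pow_mem (W.inv_mem hgW) _) (hmemW A)
  obtain ⟨m, r, ⟨i₀, hri⟩, hsum⟩ := lin_dep_of_mem_adjoin (RatFunc ℚ) L x hxint
    (fun n => ι ((fun g => derivative ℚ g)^[n] f)) hDnW
  obtain ⟨b, hb⟩ := IsLocalization.exist_integer_multiples_of_finite
      (nonZeroDivisors (Polynomial ℚ)) r
  choose c hc using hb
  have hbne : (b : Polynomial ℚ) ≠ 0 := nonZeroDivisors.coe_ne_zero b
  refine ⟨m, c, ⟨i₀, ?_⟩, ?_⟩
  · intro h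
    apply hri
    have h5 := hc i₀
    rw [h, map_zero] at h5
    have h6 : (algebraMap (Polynomial ℚ) (RatFunc ℚ) b) * r i₀ = 0 := by
      rw [← Algebra.smul_def]
      exact h5.symm
    rcases mul_eq_zero.mp h6 with h' | h'
    · exact absurd h' ((map_ne_zero_iff _ (IsFractionRing.injective _ _)).mpr hbne)
    · exact h'
  · apply hι
    rw [map_sum, map_zero]
    have h7 : ∀ i : Fin (m+1), ι ((c i : PowerSeries ℚ) * ((fun g => derivative ℚ g)^[(i : ℕ)] f))
        = φ (b : Polynomial ℚ)
          * (r i • ι ((fun g => derivative ℚ g)^[(i : ℕ)] f)) := by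
      intro i
      rw [map_mul]
      have h8 : ι ((c i : PowerSeries ℚ)) = φ (c i) := by
        rw [hφ', RingHom.comp_apply, Polynomial.coeToPowerSeries.ringHom_apply]
      rw [h8, ← halg (c i), hc i, Algebra.smul_def, map_mul, halg b, Algebra.smul_def]
      ring
    rw [Finset.sum_congr rfl (fun i _ => h7 i), ← Finset.mul_sum, hsum, mul_zero]
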